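/- Every torsion-free additive commutative group G admits a total order compatible with addition. -/

import Mathlib

/-- Every torsion-free additive commutative group admits a total order (strict total order)
compatible with addition. -/
theorem exists_order_of_torsionFree
    {G : Type*} [AddCommGroup G]
    (htf : ∀ n : ℕ, 0 < n → ∀ x : G, n • x = 0 → x = 0) :
    ∃ r : G → G → Prop,
      IsStrictTotalOrder G r ∧ ∀ x y a : G, r x y → r (x + a) (y + a) := by
  classical
  -- Localize G at the nonzero integers: V is a vector space over K = Frac(ℤ).
  set S := nonZeroDivisors ℤ
  let K := FractionRing ℤ
  let V := LocalizedModule S G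
  let f := LocalizedModule.mkLinearMap S G
  -- f is injective since G is torsion-free
  have hf : Function.Injective f := by
    intro x y hxy
    have h0 : f (x - y) = 0 := by rw [map_sub, hxy, sub_self]
    rw [LocalizedModule.mkLinearMap_apply, ← LocalizedModule.zero_mk (1 : S),
      LocalizedModule.mk_eq] at h0
    obtain ⟨u, hu⟩ := h0
    simp only [one_smul, smul_zero] at hu
    have hs : (u : ℤ) • (x - y) = 0 := hu
    have hsne : (u : ℤ) ≠ 0 := nonZeroDivisors.coe_ne_zero u
    have hz : ((u : ℤ).natAbs : ℤ) • (x - y) = 0 := by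
      rcases Int.natAbs_eq (u : ℤ) with h | h
      · rw [← h]; exact hs
      · have : ((u : ℤ).natAbs : ℤ) = -(u : ℤ) := by omega
        rw [this, neg_smul, hs, neg_zero]
    rw [natCast_zsmul] at hz
    have := htf (u : ℤ).natAbs (Int.natAbs_pos.mpr hsne) (x - y) hz
    exact sub_eq_zero.mp this
  -- A basis of V over K
  let b := Module.Basis.ofVectorSpace K V
  let ι := Module.Basis.ofVectorSpaceIndex K V
  letI : LinearOrder ι := linearOrderOfSTO WellOrderingRel
  -- identify K with ℚ
  let e : K ≃+* ℚ := (FractionRing.algEquiv ℤ ℚ).toRingEquiv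
  -- the full embedding into Lex (ι →₀ ℚ)
  let F : G → Lex (ι →₀ ℚ) := fun x =>
    toLex (Finsupp.mapRange e (map_zero e) (b.repr (f x)))
  have hFadd : ∀ x y : G, F (x + y) = F x + F y := by
    intro x y
    show toLex _ = _
    rw [map_add, map_add, Finsupp.mapRange_add (by exact fun a b => map_add e a b)]
    rfl
  have hFinj : Function.Injective F := by
    intro x y hxy
    apply hf
    apply b.repr.injective
    have : Function.Injective
        (Finsupp.mapRange (e : K → ℚ) (map_zero e) : (ι →₀ K) → (ι →₀ ℚ)) :=
      Finsupp.mapRange_injective _ _ e.injective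
    exact this (toLex.injective hxy)
  refine ⟨fun x y => F x < F y,
    { irrefl := fun x => lt_irrefl _
      trans := fun _ _ _ => lt_trans
      trichotomous := fun x y => ?_ }, fun x y a h => ?_⟩
  · rcases lt_trichotomy (F x) (F y) with h | h | h
    · exact fun h1 _ => absurd h h1
    · exact fun _ _ => hFinj h
    · exact fun _ h2 => absurd h h2
  · show F (x + a) < F (y + a)
    rw [hFadd, hFadd]
    exact add_lt_add_left h _
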